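/- Assume R ≥ 2, (QR−1)/(R−1) ≤ L, and set α = 1, k = ⌊(Q−R)/(R−1)⌋, l = Q−R−k(R−1), with index sets I_m = [1 : Q+k+1] for m ∈ [1 : R−l−1], I_m = [1 : Q+k+2] for m ∈ [R−l : R−1], and I_R = [1:L]. Set K = [1 : ⌈(QR−1)/(R−1)⌉]. If every Q row vectors of the submatrix Q_K are linearly independent (Property (A)), then det(J4(·)) is not identically zero, i.e., there exists s ∈ ℂ^{QR} with det(J4(s)) ≠ 0. -/

import Mathlib

open Matrix Kronecker

noncomputable section

/-- The block-diagonal row-selection matrix `diag((I_L)_{I_1}, …, (I_L)_{I_R})` where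
`I_m = [1 : sz m]` is an initial segment: row `(m, i)`, column `(m', j)` carries a `1`
iff `m = m'` and `i = j`. -/
def selBlocks (L R : ℕ) (sz : Fin R → ℕ) :
    Matrix ((m : Fin R) × Fin (sz m)) (Fin R × Fin L) ℂ :=
  Matrix.of fun r mj => if r.1 = mj.1 ∧ (r.2 : ℕ) = (mj.2 : ℕ) then 1 else 0

/-- The vector `a_i = (I_R ⊗ diag(e_i) Q) s ∈ ℂ^{LR}`. -/
def aVec {L Q R : ℕ} (Qmat : Matrix (Fin L) (Fin Q) ℂ) (s : Fin R × Fin Q → ℂ)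
    (i : Fin L) : Fin R × Fin L → ℂ :=
  ((1 : Matrix (Fin R) (Fin R) ℂ) ⊗ₖ
    (Matrix.diagonal (fun j => if j = i then (1 : ℂ) else 0) * Qmat)).mulVec s

/-- The matrix `J4(s) = P1 [(I_R ⊗ Q) | a_{α+1} | … | a_{c_{R−1}}]`, where
`P1 = diag((I_L)_{I_1}, …, (I_L)_{I_{R−1}}, (I_L)_{I_{R−1}})` and `I_i = [1 : c (i-1)]`
(0-based: block `m` of `P1` has size `c (min m (R-2))`, so the last block is duplicated).
Rows are indexed by `(m : Fin R) × Fin (c (min m (R-2)))`, columns by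
`(Fin R × Fin Q) ⊕ Fin (c (R-2) − α)`; appended column `j` (0-based) is
`a_{α+1+j}` (1-based), i.e. `aVec` at the `Fin L`-index `α + j` (0-based). -/
def J4 (L Q R α : ℕ) (Qmat : Matrix (Fin L) (Fin Q) ℂ) (c : ℕ → ℕ)
    (s : Fin R × Fin Q → ℂ) :
    Matrix ((m : Fin R) × Fin (c (min (m : ℕ) (R - 2))))
      ((Fin R × Fin Q) ⊕ Fin (c (R - 2) - α)) ℂ :=
  selBlocks L R (fun m => c (min (m : ℕ) (R - 2))) *
    Matrix.fromCols ((1 : Matrix (Fin R) (Fin R) ℂ) ⊗ₖ Qmat)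
      (Matrix.of fun rj (j : Fin (c (R - 2) - α)) =>
        if h : α + (j : ℕ) < L then aVec Qmat s ⟨α + (j : ℕ), h⟩ rj else 0)

/- ## auxiliary lemmas -/

lemma selBlocks_mul_apply {L R : ℕ} {sz : Fin R → ℕ} {n : Type*} [Fintype n]
    (F : Matrix (Fin R × Fin L) n ℂ) (r : (m : Fin R) × Fin (sz m)) (col : n)
    (h : (r.2 : ℕ) < L) :
    (selBlocks L R sz * F) r col = F (r.1, ⟨(r.2 : ℕ), h⟩) col := by
  rw [Matrix.mul_apply]
  rw [Fintype.sum_prod_type]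
  rw [Finset.sum_eq_single r.1]
  · rw [Finset.sum_eq_single (⟨(r.2 : ℕ), h⟩ : Fin L)]
    · simp [selBlocks]
    · intro b _ hb
      simp only [selBlocks, Matrix.of_apply]
      rw [if_neg, zero_mul]
      rintro ⟨-, h2⟩
      exact hb (Fin.val_injective h2.symm)
    · intro habs; exact absurd (Finset.mem_univ _) habs
  · intro b _ hb
    apply Finset.sum_eq_zero
    intro j _
    simp only [selBlocks, Matrix.of_apply]
    rw [if_neg, zero_mul]
    rintro ⟨h1, -⟩
    exact hb h1.symm
  · intro habs; exact absurd (Finset.mem_univ _) habs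

lemma dot_eq_zero_all {L Q : ℕ} (Qmat : Matrix (Fin L) (Fin Q) ℂ) (S : Finset (Fin L))
    (hcard : S.card = Q) (hQ : 0 < Q)
    (hind : LinearIndependent ℂ (fun (j : S) => Qmat j))
    (v : Fin Q → ℂ) (hv : ∀ i ∈ S, Qmat i ⬝ᵥ v = 0) : v = 0 := by
  have hne : Nonempty S := by
    rw [Finset.nonempty_coe_sort, ← Finset.card_pos, hcard]; exact hQ
  have hspan : Submodule.span ℂ (Set.range fun (j : S) => Qmat j) = ⊤ :=
    hind.span_eq_top_of_card_eq_finrank (by simp [hcard])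
  have key : ∀ w : Fin Q → ℂ, w ⬝ᵥ v = 0 := by
    intro w
    have hw : w ∈ Submodule.span ℂ (Set.range fun (j : S) => Qmat j) :=
      hspan ▸ Submodule.mem_top
    induction hw using Submodule.span_induction with
    | mem x hx => obtain ⟨j, rfl⟩ := hx; exact hv j j.2
    | zero => simp
    | add x y _ _ hx hy => rw [add_dotProduct, hx, hy, add_zero]
    | smul a x _ hx => rw [smul_dotProduct, hx, smul_zero]
  funext j
  have := key (Pi.single j 1)
  rwa [single_dotProduct, one_mul] at this

lemma exists_kernel_vec {L Q : ℕ} (Qmat : Matrix (Fin L) (Fin Q) ℂ) (S : Finset (Fin L))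
    (hcard : S.card < Q) :
    ∃ v : Fin Q → ℂ, v ≠ 0 ∧ ∀ i ∈ S, Qmat i ⬝ᵥ v = 0 := by
  set φ : (Fin Q → ℂ) →ₗ[ℂ] (S → ℂ) :=
    { toFun := fun v j => Qmat j ⬝ᵥ v
      map_add' := by intro a b; funext j; simp [dotProduct_add]
      map_smul' := by intro a b; funext j; simp [dotProduct_smul] }
  have hni : ¬ Function.Injective φ := by
    intro hinj
    have h1 : Module.finrank ℂ (Fin Q → ℂ) = Q := by simp
    have h2 := LinearMap.finrank_range_of_inj hinj
    have h3 := Submodule.finrank_le (LinearMap.range φ)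
    have h4 : Module.finrank ℂ (S → ℂ) = S.card := by simp
    omega
  rw [injective_iff_map_eq_zero'] at hni
  push_neg at hni
  obtain ⟨v, hv⟩ := hni
  rcases hv with ⟨hv0, hvne⟩ | ⟨hvne, hv0⟩
  · exact ⟨v, hvne, fun i hi => congrFun hv0 ⟨i, hi⟩⟩
  · exact absurd (by rw [hv0]; exact map_zero φ) hvne

lemma exists_block (g : ℕ → ℕ) :
    ∀ (M t : ℕ), g 0 ≤ t → t < g M → ∃ m < M, g m ≤ t ∧ t < g (m + 1) := by
  intro M
  induction M with
  | zero => intro t h0 h1; omega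
  | succ M ih =>
    intro t h0 h1
    by_cases h : t < g M
    · obtain ⟨m, hm, h2⟩ := ih t h0 h
      exact ⟨m, by omega, h2⟩
    · exact ⟨M, by omega, by omega⟩

lemma aVec_apply {L Q R : ℕ} (Qmat : Matrix (Fin L) (Fin Q) ℂ) (s : Fin R × Fin Q → ℂ)
    (i : Fin L) (m : Fin R) (j : Fin L) :
    aVec Qmat s i (m, j) =
      (if j = i then 1 else 0) * (Qmat i ⬝ᵥ fun q => s (m, q)) := by
  unfold aVec
  rw [Matrix.mulVec, dotProduct, Fintype.sum_prod_type]
  rw [Finset.sum_eq_single m]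
  · by_cases hji : j = i
    · subst hji
      simp [Matrix.kroneckerMap_apply, Matrix.diagonal_mul, dotProduct, Finset.mul_sum]
    · simp [Matrix.kroneckerMap_apply, Matrix.diagonal_mul, hji]
  · intro b _ hb
    apply Finset.sum_eq_zero; intro q _
    simp [Matrix.kroneckerMap_apply, Matrix.one_apply_ne (Ne.symm hb)]
  · intro habs; exact absurd (Finset.mem_univ _) habs

/-- the offset function: `offN k T m = m*(k+1) + (m - T)` defined recursively. -/
def offN (k T : ℕ) : ℕ → ℕ
  | 0 => 0
  | m + 1 => offN k T m + (k + 1 + if T ≤ m then 1 else 0)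

lemma offN_lt_succ (k T : ℕ) (m : ℕ) : offN k T m < offN k T (m + 1) := by
  simp only [offN]; split_ifs <;> omega

lemma offN_mono (k T : ℕ) : ∀ {a b : ℕ}, a ≤ b → offN k T a ≤ offN k T b := by
  intro a b hab
  induction b with
  | zero =>
    obtain rfl : a = 0 := by omega
    exact le_rfl
  | succ b ih =>
    rcases Nat.lt_or_ge a (b + 1) with h | h
    · have h2 := ih (by omega)
      have h3 := offN_lt_succ k T b
      omega
    · obtain rfl : a = b + 1 := by omega
      exact le_rfl

lemma offN_closed (k T : ℕ) : ∀ m, offN k T m = m * (k + 1) + (m - T) := by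
  intro m
  induction m with
  | zero => simp [offN]
  | succ m ih =>
    have hmul : (m + 1) * (k + 1) = m * (k + 1) + (k + 1) := by ring
    simp only [offN, ih, hmul]
    split_ifs <;> omega

/-!
STATEMENT 4: Assume `R ≥ 2`, `(QR−1)/(R−1) ≤ L` (encoded as `QR − 1 ≤ L(R−1)`), and set
`α = 1`, `k = ⌊(Q−R)/(R−1)⌋`, `l = Q−R−k(R−1)`, with index sets `I_m = [1 : Q+k+1]` for
`m ∈ [1 : R−l−1]`, `I_m = [1 : Q+k+2]` for `m ∈ [R−l : R−1]`, and `I_R = [1:L]`.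
Set `K = [1 : ⌈(QR−1)/(R−1)⌉]`. If every `Q` row vectors of the submatrix `Q_K` are
linearly independent (Property (A)), then `det(J4(·))` is not identically zero, i.e.
there exists `s ∈ ℂ^{QR}` with `det(J4(s)) ≠ 0`.
(The sizes `|I_1|, …, |I_{R−1}|` are encoded as `c 0, …, c (R-2)`; the determinant is
computed after reindexing rows/columns of the square matrix `J4(s)` by an arbitrary
equivalence `e`, which does not affect nonvanishing; `⌈(QR−1)/(R−1)⌉` is the natural
number `(QR − 1 + (R − 2))/(R − 1)`; `K = {j : Fin L | (j : ℕ) < Kcard}` in 0-based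
indexing.) -/
theorem statement4 {L Q R : ℕ} (hR : 2 ≤ R) (hRQ : R ≤ Q) (hQL : Q < L)
    (hKL : Q * R - 1 ≤ L * (R - 1))
    (k l : ℕ) (hk : k = (Q - R) / (R - 1)) (hl : l = Q - R - k * (R - 1))
    (c : ℕ → ℕ) (hc : ∀ m : ℕ, c m = if m < R - l - 1 then Q + k + 1 else Q + k + 2)
    (Kcard : ℕ) (hKcard : Kcard = (Q * R - 1 + (R - 2)) / (R - 1))
    (Qmat : Matrix (Fin L) (Fin Q) ℂ)
    (hA : ∀ S : Finset (Fin L), (∀ j ∈ S, (j : ℕ) < Kcard) → S.card = Q →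
      LinearIndependent ℂ (fun (j : S) => Qmat j)) :
    ∀ e : ((Fin R × Fin Q) ⊕ Fin (c (R - 2) - 1)) ≃
        ((m : Fin R) × Fin (c (min (m : ℕ) (R - 2)))),
      ∃ s : Fin R × Fin Q → ℂ,
        ((J4 L Q R 1 Qmat c s).submatrix e id).det ≠ 0 := by
  intro e
  -- ## arithmetic preliminaries
  have hR1 : 0 < R - 1 := by omega
  have hQeq : Q = R + k * (R - 1) + l ∧ l < R - 1 := by
    have hdiv := Nat.div_add_mod (Q - R) (R - 1)
    have hmod : (Q - R) % (R - 1) < R - 1 := Nat.mod_lt _ hR1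
    have hcomm : (R - 1) * ((Q - R) / (R - 1)) = ((Q - R) / (R - 1)) * (R - 1) :=
      Nat.mul_comm _ _
    subst hk hl
    omega
  obtain ⟨hQeq, hlR⟩ := hQeq
  set T : ℕ := if l = 0 then R else R - l - 1 with hTdef
  set E : ℕ := if l = 0 then 0 else 1 with hEdef
  have hTE : (l = 0 ∧ T = R ∧ E = 0) ∨ (0 < l ∧ T + l + 1 = R ∧ E = 1) := by
    rcases Nat.eq_zero_or_pos l with h | h
    · left; refine ⟨h, ?_, ?_⟩ <;> simp [hTdef, hEdef, h]
    · right; refine ⟨h, ?_, ?_⟩ <;> simp [hTdef, hEdef, Nat.pos_iff_ne_zero.mp h] <;> omega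
  have hb1 : k * (R - 1) + k = k * R := by rw [← Nat.mul_succ]; congr 1; omega
  have hb2 : Q * (R - 1) + Q = Q * R := by rw [← Nat.mul_succ]; congr 1; omega
  -- Kcard bounds
  have hKge : Q + k + 1 + E ≤ Kcard := by
    rw [hKcard, Nat.le_div_iff_mul_le hR1]
    rcases hTE with ⟨hl0, hTv, hEv⟩ | ⟨hl1, hTv, hEv⟩
    · rw [hEv]
      have hbr : (Q + k + 1 + 0) * (R - 1) = Q * (R - 1) + k * (R - 1) + (R - 1) := by ring
      omega
    · rw [hEv]
      have hbr : (Q + k + 1 + 1) * (R - 1) = Q * (R - 1) + k * (R - 1) + 2 * (R - 1) := by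
        ring
      omega
  have hKL2 : Kcard ≤ L := by
    have : Kcard < L + 1 := by
      rw [hKcard, Nat.div_lt_iff_lt_mul hR1]
      have hbr : (L + 1) * (R - 1) = L * (R - 1) + (R - 1) := by ring
      omega
    omega
  -- sizes of the blocks
  have hcm : ∀ m : ℕ, m < R →
      c (min m (R - 2)) = Q + k + 1 + (if T ≤ m then 1 else 0) := by
    intro m hm
    rw [hc]
    rcases hTE with ⟨hl0, hTv, hEv⟩ | ⟨hl1, hTv, hEv⟩ <;> split_ifs <;> omega
  have hNval : c (R - 2) - 1 = Q + k + E := by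
    have h1 := hcm (R - 1) (by omega)
    rw [show min (R - 1) (R - 2) = R - 2 by omega] at h1
    rcases hTE with ⟨hl0, hTv, hEv⟩ | ⟨hl1, hTv, hEv⟩ <;> split_ifs at h1 <;> omega
  -- offset facts
  have hoffR : offN k T R = c (R - 2) - 1 := by
    rw [offN_closed]
    have hb3 : R * (k + 1) = R * k + R := by ring
    have hb5 : R * k = k * R := Nat.mul_comm _ _
    rcases hTE with ⟨hl0, hTv, hEv⟩ | ⟨hl1, hTv, hEv⟩ <;> omega
  have hoff_le : ∀ m : ℕ, m < R → offN k T (m + 1) + 1 ≤ c (min m (R - 2)) := by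
    intro m hm
    rw [hcm m hm]
    have hmono := offN_mono k T (show m + 1 ≤ R by omega)
    rw [hoffR] at hmono
    by_cases hTm : T ≤ m
    · rcases hTE with ⟨hl0, hTv, hEv⟩ | ⟨hl1, hTv, hEv⟩ <;> split_ifs <;> omega
    · rcases hTE with ⟨hl0, hTv, hEv⟩ | ⟨hl1, hTv, hEv⟩
      · split_ifs <;> omega
      · -- l ≥ 1, m < T : need offN (m+1) ≤ Q + k = N - 1, strict step
        have hstep := offN_lt_succ k T (m + 1)
        have hmono2 := offN_mono k T (show m + 1 + 1 ≤ R by omega)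
        rw [hoffR] at hmono2
        split_ifs <;> omega
  
  -- ## per-block facts
  have hcmK : ∀ m : ℕ, m < R → c (min m (R - 2)) ≤ Kcard := by
    intro m hm
    have h1 := hcm m hm
    rcases hTE with ⟨hl0, hTv, hEv⟩ | ⟨hl1, hTv, hEv⟩ <;> split_ifs at h1 <;> omega
  have hcmL : ∀ m : ℕ, m < R → c (min m (R - 2)) ≤ L := fun m hm =>
    le_trans (hcmK m hm) hKL2
  have htL : ∀ t : Fin (c (R - 2) - 1), 1 + (t : ℕ) < L := by
    intro t
    have h1 := t.2
    have h2 := hcmK (R - 1) (by omega)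
    rw [show min (R - 1) (R - 2) = R - 2 by omega] at h2
    omega
  have hstep : ∀ m : ℕ, m < R →
      offN k T (m + 1) + Q = offN k T m + c (min m (R - 2)) := by
    intro m hm
    rw [hcm m hm]
    simp only [offN]
    split_ifs <;> omega
  -- the row-index sets
  set Bn : Fin R → Finset ℕ := fun m =>
    Finset.Ico 1 (offN k T (m : ℕ) + 1) ∪
      Finset.Ico (offN k T ((m : ℕ) + 1) + 1) (c (min (m : ℕ) (R - 2))) with hBn
  have hBmem : ∀ (m : Fin R) (i : ℕ), i ∈ Bn m ↔
      ((1 ≤ i ∧ i ≤ offN k T (m : ℕ)) ∨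
        (offN k T ((m : ℕ) + 1) + 1 ≤ i ∧ i < c (min (m : ℕ) (R - 2)))) := by
    intro m i
    rw [hBn]
    simp only [Finset.mem_union, Finset.mem_Ico]
    omega
  have hBlt : ∀ (m : Fin R), ∀ i ∈ Bn m, i < c (min (m : ℕ) (R - 2)) := by
    intro m i hi
    rw [hBmem] at hi
    have h1 := offN_mono k T (show (m : ℕ) ≤ (m : ℕ) + 1 by omega)
    have h2 := hoff_le (m : ℕ) m.2
    omega
  have hBltL : ∀ (m : Fin R), ∀ i ∈ Bn m, i < L := fun m i hi =>
    lt_of_lt_of_le (hBlt m i hi) (hcmL (m : ℕ) m.2)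
  have hBcard : ∀ m : Fin R, (Bn m).card = Q - 1 := by
    intro m
    rw [hBn]
    rw [Finset.card_union_of_disjoint]
    · rw [Nat.card_Ico, Nat.card_Ico]
      have h1 := offN_mono k T (show (m : ℕ) ≤ (m : ℕ) + 1 by omega)
      have h2 := hoff_le (m : ℕ) m.2
      have h3 := hstep (m : ℕ) m.2
      omega
    · rw [Finset.disjoint_left]
      intro a ha hb
      simp only [Finset.mem_Ico] at ha hb
      have h1 := offN_mono k T (show (m : ℕ) ≤ (m : ℕ) + 1 by omega)
      omega
  set BnL : Fin R → Finset (Fin L) := fun m => (Bn m).attachFin (hBltL m) with hBnL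
  have hBnLmem : ∀ (m : Fin R) (j : Fin L), j ∈ BnL m ↔ (j : ℕ) ∈ Bn m := by
    intro m j
    rw [hBnL]
    exact Finset.mem_attachFin _
  have hL0 : 0 < L := by omega
  set GnL : Fin R → Finset (Fin L) := fun m => insert ⟨0, hL0⟩ (BnL m) with hGnL
  have hGcard : ∀ m : Fin R, (GnL m).card = Q := by
    intro m
    rw [hGnL]
    rw [Finset.card_insert_of_notMem, hBnL, Finset.card_attachFin, hBcard]
    · omega
    · intro hmem
      rw [hBnLmem, hBmem] at hmem
      simp only [Fin.val_mk] at hmem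
      omega
  have hGK : ∀ (m : Fin R), ∀ j ∈ GnL m, (j : ℕ) < Kcard := by
    intro m j hj
    rw [hGnL, Finset.mem_insert] at hj
    rcases hj with rfl | hj
    · simp; omega
    · rw [hBnLmem] at hj
      exact lt_of_lt_of_le (hBlt m _ hj) (hcmK (m : ℕ) m.2)
  -- the zero-forcing principle from property (A)
  have hzero : ∀ (S : Finset (Fin L)), S.card = Q → (∀ j ∈ S, (j : ℕ) < Kcard) →
      ∀ v : Fin Q → ℂ, (∀ i ∈ S, Qmat i ⬝ᵥ v = 0) → v = 0 := by
    intro S h1 h2 v hv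
    exact dot_eq_zero_all Qmat S h1 (by omega) (hA S h2 h1) v hv
  -- construction of s
  have hs : ∀ m : Fin R, ∃ v : Fin Q → ℂ, v ≠ 0 ∧ ∀ i ∈ BnL m, Qmat i ⬝ᵥ v = 0 := by
    intro m
    apply exists_kernel_vec
    rw [hBnL, Finset.card_attachFin, hBcard]
    omega
  choose sV hsV0 hsVz using hs
  set s : Fin R × Fin Q → ℂ := fun p => sV p.1 p.2 with hsdef
  have hsm : ∀ m : Fin R, (fun q => s (m, q)) = sV m := fun m => rfl
  -- the key nonvanishing property for assigned rows
  have hP4 : ∀ (m : Fin R) (i : ℕ) (hi : i < L), offN k T (m : ℕ) < i →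
      i ≤ offN k T ((m : ℕ) + 1) → Qmat ⟨i, hi⟩ ⬝ᵥ sV m ≠ 0 := by
    intro m i hi h1 h2 hdot
    have h3 := hoff_le (m : ℕ) m.2
    have hnotmem : (⟨i, hi⟩ : Fin L) ∉ BnL m := by
      rw [hBnLmem, hBmem]
      simp only [Fin.val_mk]
      omega
    have hcard : (insert (⟨i, hi⟩ : Fin L) (BnL m)).card = Q := by
      rw [Finset.card_insert_of_notMem hnotmem, hBnL, Finset.card_attachFin, hBcard]
      omega
    have hbound : ∀ j ∈ insert (⟨i, hi⟩ : Fin L) (BnL m), (j : ℕ) < Kcard := by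
      intro j hj
      rw [Finset.mem_insert] at hj
      rcases hj with rfl | hj
      · have := hcmK (m : ℕ) m.2; simp; omega
      · rw [hBnLmem] at hj
        exact lt_of_lt_of_le (hBlt m _ hj) (hcmK (m : ℕ) m.2)
    have := hzero _ hcard hbound (sV m) (by
      intro j hj
      rw [Finset.mem_insert] at hj
      rcases hj with rfl | hj
      · exact hdot
      · exact hsVz m j hj)
    exact hsV0 m this
  -- ## the determinant is nonzero
  refine ⟨s, fun hdet => ?_⟩
  rw [← Matrix.exists_mulVec_eq_zero_iff] at hdet
  obtain ⟨x, hxne, hxker⟩ := hdet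
  apply hxne
  have hrow : ∀ r : (m : Fin R) × Fin (c (min (m : ℕ) (R - 2))),
      ∑ col, (J4 L Q R 1 Qmat c s) r col * x col = 0 := by
    intro r
    have h := congrFun hxker (e.symm r)
    simpa [Matrix.mulVec, dotProduct, Matrix.submatrix_apply] using h
  -- the cleaned-up row equation
  have key : ∀ (m : Fin R) (i : ℕ) (hic : i < c (min (m : ℕ) (R - 2))) (hiL : i < L),
      (Qmat ⟨i, hiL⟩ ⬝ᵥ fun q => x (Sum.inl (m, q))) +
        ∑ t : Fin (c (R - 2) - 1), (if i = 1 + (t : ℕ) then 1 else 0) *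
          (Qmat ⟨1 + (t : ℕ), htL t⟩ ⬝ᵥ sV m) * x (Sum.inr t) = 0 := by
    intro m i hic hiL
    refine Eq.trans ?_ (hrow ⟨m, ⟨i, hic⟩⟩)
    simp only [J4]
    set A := (1 : Matrix (Fin R) (Fin R) ℂ) ⊗ₖ Qmat with hA'
    set B := (Matrix.of fun rj (j : Fin (c (R - 2) - 1)) =>
      if h : 1 + (j : ℕ) < L then aVec Qmat s ⟨1 + (j : ℕ), h⟩ rj else 0) with hB'
    have h1 : ∑ p : Fin R × Fin Q,
        Matrix.fromCols A B (m, ⟨i, hiL⟩) (Sum.inl p) * x (Sum.inl p) =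
        Qmat ⟨i, hiL⟩ ⬝ᵥ fun q => x (Sum.inl (m, q)) := by
      simp only [Matrix.fromCols_apply_inl]
      rw [Fintype.sum_prod_type]
      rw [Finset.sum_eq_single m]
      · simp only [hA', Matrix.kroneckerMap_apply, Matrix.one_apply_eq, one_mul]
        rfl
      · intro b _ hb
        apply Finset.sum_eq_zero
        intro q _
        simp [hA', Matrix.kroneckerMap_apply, Matrix.one_apply_ne (Ne.symm hb)]
      · intro habs
        exact absurd (Finset.mem_univ _) habs
    have h2 : ∑ t : Fin (c (R - 2) - 1),
        Matrix.fromCols A B (m, ⟨i, hiL⟩) (Sum.inr t) * x (Sum.inr t) =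
        ∑ t : Fin (c (R - 2) - 1), (if i = 1 + (t : ℕ) then 1 else 0) *
          (Qmat ⟨1 + (t : ℕ), htL t⟩ ⬝ᵥ sV m) * x (Sum.inr t) := by
      apply Finset.sum_congr rfl
      intro t _
      rw [Matrix.fromCols_apply_inr, hB', Matrix.of_apply, dif_pos (htL t),
        aVec_apply, hsm]
      simp only [Fin.mk.injEq]
    symm
    calc ∑ col, (selBlocks L R (fun m => c (min (m : ℕ) (R - 2))) *
            Matrix.fromCols A B) ⟨m, ⟨i, hic⟩⟩ col * x col
        = ∑ col, Matrix.fromCols A B (m, ⟨i, hiL⟩) col * x col :=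
          Finset.sum_congr rfl (fun col _ => by
            rw [selBlocks_mul_apply (Matrix.fromCols A B) ⟨m, ⟨i, hic⟩⟩ col hiL])
      _ = (∑ p : Fin R × Fin Q,
              Matrix.fromCols A B (m, ⟨i, hiL⟩) (Sum.inl p) * x (Sum.inl p)) +
            ∑ t : Fin (c (R - 2) - 1),
              Matrix.fromCols A B (m, ⟨i, hiL⟩) (Sum.inr t) * x (Sum.inr t) :=
          Fintype.sum_sum_type _
      _ = _ := by rw [h1, h2]
  -- step 1: the x-part vanishes
  have hx1 : ∀ (m : Fin R) (q : Fin Q), x (Sum.inl (m, q)) = 0 := by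
    have hmain : ∀ m : Fin R, (fun q => x (Sum.inl (m, q))) = 0 := by
      intro m
      apply hzero (GnL m) (hGcard m) (hGK m)
      intro j hj
      rw [hGnL, Finset.mem_insert] at hj
      have hjc : (j : ℕ) < c (min (m : ℕ) (R - 2)) := by
        rcases hj with rfl | hj
        · have hcc := hcm (m : ℕ) m.2
          simp only [Fin.val_mk]
          split_ifs at hcc <;> omega
        · exact hBlt m _ ((hBnLmem m j).mp hj)
      have h := key m (j : ℕ) hjc j.2
      rw [Fin.eta] at h
      rw [Finset.sum_eq_zero, add_zero] at h
      · exact h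
      · intro t _
        by_cases hit : (j : ℕ) = 1 + (t : ℕ)
        · have hjB : (j : ℕ) ∈ Bn m := by
            rcases hj with rfl | hj
            · exfalso
              simp only [Fin.val_mk] at hit
              omega
            · exact (hBnLmem m j).mp hj
          have hmem : (⟨1 + (t : ℕ), htL t⟩ : Fin L) ∈ BnL m := by
            rw [hBnLmem]
            simp only [Fin.val_mk]
            rw [← hit]
            exact hjB
          rw [hsVz m ⟨1 + (t : ℕ), htL t⟩ hmem, mul_zero, zero_mul]
        · rw [if_neg hit, zero_mul, zero_mul]
    exact fun m q => congrFun (hmain m) q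
  -- step 2: the y-part vanishes
  have hx2 : ∀ t : Fin (c (R - 2) - 1), x (Sum.inr t) = 0 := by
    intro t
    obtain ⟨mv, hmv, h1, h2⟩ := exists_block (offN k T) R (t : ℕ)
      (by simp [offN]) (by rw [hoffR]; exact t.2)
    have hic : 1 + (t : ℕ) < c (min mv (R - 2)) := by
      have := hoff_le mv hmv
      omega
    have h := key ⟨mv, hmv⟩ (1 + (t : ℕ)) hic (htL t)
    rw [show (fun q => x (Sum.inl (⟨mv, hmv⟩, q))) = 0 from funext (hx1 ⟨mv, hmv⟩),
      dotProduct_zero, zero_add] at h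
    rw [Finset.sum_eq_single t] at h
    · rw [if_pos rfl, one_mul] at h
      rcases mul_eq_zero.mp h with h | h
      · refine absurd h (hP4 ⟨mv, hmv⟩ (1 + (t : ℕ)) (htL t) ?_ ?_)
        · show offN k T mv < 1 + (t : ℕ)
          omega
        · show 1 + (t : ℕ) ≤ offN k T (mv + 1)
          omega
      · exact h
    · intro b _ hb
      rw [if_neg, zero_mul, zero_mul]
      intro hbe
      exact hb (Fin.ext (by omega))
    · intro habs
      exact absurd (Finset.mem_univ _) habs
  funext p
  rcases p with ⟨m, q⟩ | t
  · exact hx1 m q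
  · exact hx2 t
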